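/- Let A ≪ B in 𝕀ℝ, let F : 𝕀_{[A,B]} → 𝕀ℝ be a bounded interval function, let C = A + s(B−A) for some s ∈ (0,1) (so C lies on the segment from A to B), and let 𝔓'[A,B] be the set of partitions of 𝕀_{[A,B]} that contain C. Then ∫̲_A^B F(X)dX = sup{σ(F,𝒫) : 𝒫 ∈ 𝔓'[A,B]} and ∫̄_A^B F(X)dX = inf{Σ(F,𝒫) : 𝒫 ∈ 𝔓'[A,B]}. -/

import Mathlib

/-- `𝕀ℝ`: the set of nonempty closed bounded real intervals, identified with
pairs `(lo, hi) ∈ ℝ × ℝ` with `lo ≤ hi`.  The subtype order inherited from the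
product order on `ℝ × ℝ` is exactly the Kulisch–Miranker order, and the
inherited metric (sup metric of `ℝ × ℝ`) is exactly the Moore metric `d_M`. -/
abbrev IR : Type := {p : ℝ × ℝ // p.1 ≤ p.2}

namespace IR

/-- Left endpoint projection `π₁`. -/
def lo (A : IR) : ℝ := A.val.1

/-- Right endpoint projection `π₂`. -/
def hi (A : IR) : ℝ := A.val.2

/-- The strict Kulisch–Miranker order `A ≪ B`. -/
def sll (A B : IR) : Prop := lo A < lo B ∧ hi A < hi B

/-- The Moore metric `d_M`. -/
noncomputable def dM (A B : IR) : ℝ := max |lo B - lo A| |hi B - hi A|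

/-- `𝕀_{[A,B]} = {X ∈ 𝕀ℝ : A ≤ X ≤ B}`. -/
def box (A B : IR) : Set IR := {X : IR | A ≤ X ∧ X ≤ B}

/-- The interval `[u,v]` (with a junk degenerate value if `u > v`). -/
noncomputable def mkI (u v : ℝ) : IR := if h : u ≤ v then ⟨(u, v), h⟩ else ⟨(u, u), le_rfl⟩

/-- The point `A + t(B - A)` on the segment from `A` to `B`. -/
noncomputable def seg (A B : IR) (t : ℝ) : IR :=
  mkI (lo A + t * (lo B - lo A)) (hi A + t * (hi B - hi A))

/-- Componentwise infimum of a set of intervals, as a pair of reals. -/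
noncomputable def infS (S : Set IR) : ℝ × ℝ := (sInf (lo '' S), sInf (hi '' S))

/-- Componentwise supremum of a set of intervals, as a pair of reals. -/
noncomputable def supS (S : Set IR) : ℝ × ℝ := (sSup (lo '' S), sSup (hi '' S))

/-- A partition `A = P₀ ≪ P₁ ≪ ⋯ ≪ P_N = B` of `𝕀_{[A,B]}`, described by its
parameters `0 = t₀ < t₁ < ⋯ < t_N = 1` (so that `P_k = A + t_k (B - A)`). -/
structure Partition where
  n : ℕ
  npos : 0 < n
  t : ℕ → ℝ
  t0 : t 0 = 0
  tn : t n = 1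
  mono : ∀ i < n, t i < t (i + 1)

/-- The set of parameters of a partition. -/
def Partition.pts (P : Partition) : Set ℝ := P.t '' Set.Iic P.n

/-- The set of points `P_k = A + t_k(B-A)` of a partition of `𝕀_{[A,B]}`. -/
noncomputable def Partition.ipts (A B : IR) (P : Partition) : Set IR :=
  (fun i => seg A B (P.t i)) '' Set.Iic P.n

/-- Lower Riemann sum `σ(F, 𝒫)` (as a pair of reals; interval sums are
componentwise and `λ • [u,v] = [λu, λv]` for the scalars `λ = d_M ≥ 0`). -/
noncomputable def lowerSum (A B : IR) (F : IR → IR) (P : Partition) : ℝ × ℝ :=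
  ∑ k ∈ Finset.range P.n,
    dM (seg A B (P.t k)) (seg A B (P.t (k + 1))) •
      infS (F '' box (seg A B (P.t k)) (seg A B (P.t (k + 1))))

/-- Upper Riemann sum `Σ(F, 𝒫)`. -/
noncomputable def upperSum (A B : IR) (F : IR → IR) (P : Partition) : ℝ × ℝ :=
  ∑ k ∈ Finset.range P.n,
    dM (seg A B (P.t k)) (seg A B (P.t (k + 1))) •
      supS (F '' box (seg A B (P.t k)) (seg A B (P.t (k + 1))))

/-- The lower integral `∫̲_A^B F(X)dX`: componentwise supremum of the lower
Riemann sums over all partitions. -/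
noncomputable def lowerInt (A B : IR) (F : IR → IR) : ℝ × ℝ :=
  (sSup (Set.range fun P : Partition => (lowerSum A B F P).1),
   sSup (Set.range fun P : Partition => (lowerSum A B F P).2))

/-- The upper integral `∫̄_A^B F(X)dX`: componentwise infimum of the upper
Riemann sums over all partitions. -/
noncomputable def upperInt (A B : IR) (F : IR → IR) : ℝ × ℝ :=
  (sInf (Set.range fun P : Partition => (upperSum A B F P).1),
   sInf (Set.range fun P : Partition => (upperSum A B F P).2))

/-- `F` is bounded on `𝕀_{[A,B]}` (order bounded, equivalently metrically
bounded). -/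
def BoundedOn (F : IR → IR) (A B : IR) : Prop :=
  ∃ C D : IR, ∀ X ∈ box A B, C ≤ F X ∧ F X ≤ D

end IR

namespace IR

lemma le_iff (X Y : IR) : X ≤ Y ↔ lo X ≤ lo Y ∧ hi X ≤ hi Y := by
  rw [← Subtype.coe_le_coe, Prod.le_def]; rfl

lemma lohi (X : IR) : lo X ≤ hi X := X.2

lemma ext_lohi {X Y : IR} (h1 : lo X = lo Y) (h2 : hi X = hi Y) : X = Y :=
  Subtype.ext (Prod.ext h1 h2)

variable (A B : IR)

lemma seg_cond {t : ℝ} (ht : t ∈ Set.Icc (0:ℝ) 1) :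
    lo A + t * (lo B - lo A) ≤ hi A + t * (hi B - hi A) := by
  obtain ⟨h0, h1⟩ := ht
  nlinarith [lohi A, lohi B]

lemma lo_seg {t : ℝ} (ht : t ∈ Set.Icc (0:ℝ) 1) :
    lo (seg A B t) = lo A + t * (lo B - lo A) := by
  rw [seg, mkI, dif_pos (seg_cond A B ht)]; rfl

lemma hi_seg {t : ℝ} (ht : t ∈ Set.Icc (0:ℝ) 1) :
    hi (seg A B t) = hi A + t * (hi B - hi A) := by
  rw [seg, mkI, dif_pos (seg_cond A B ht)]; rfl

lemma seg_zero : seg A B 0 = A := by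
  apply ext_lohi <;> simp [lo_seg A B (Set.left_mem_Icc.2 zero_le_one),
    hi_seg A B (Set.left_mem_Icc.2 zero_le_one)]

lemma seg_one : seg A B 1 = B := by
  apply ext_lohi <;> simp [lo_seg A B (Set.right_mem_Icc.2 zero_le_one),
    hi_seg A B (Set.right_mem_Icc.2 zero_le_one)]

lemma seg_mono (h : sll A B) {t t' : ℝ} (ht : t ∈ Set.Icc (0:ℝ) 1) (ht' : t' ∈ Set.Icc (0:ℝ) 1)
    (htt : t ≤ t') : seg A B t ≤ seg A B t' := by
  rw [le_iff, lo_seg A B ht, hi_seg A B ht, lo_seg A B ht', hi_seg A B ht']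
  constructor <;> nlinarith [h.1, h.2]

lemma dM_seg (h : sll A B) {t t' : ℝ} (ht : t ∈ Set.Icc (0:ℝ) 1) (ht' : t' ∈ Set.Icc (0:ℝ) 1)
    (htt : t ≤ t') :
    dM (seg A B t) (seg A B t') = (t' - t) * max (lo B - lo A) (hi B - hi A) := by
  rw [dM, lo_seg A B ht, hi_seg A B ht, lo_seg A B ht', hi_seg A B ht']
  have e1 : lo A + t' * (lo B - lo A) - (lo A + t * (lo B - lo A)) = (t' - t) * (lo B - lo A) := by ring
  have e2 : hi A + t' * (hi B - hi A) - (hi A + t * (hi B - hi A)) = (t' - t) * (hi B - hi A) := by ring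
  rw [e1, e2, abs_of_nonneg (by nlinarith [h.1]), abs_of_nonneg (by nlinarith [h.2]),
    mul_max_of_nonneg _ _ (by linarith)]


namespace Partition

lemma t_mono (P : Partition) : ∀ j, j ≤ P.n → ∀ i, i ≤ j → P.t i ≤ P.t j := by
  intro j
  induction j with
  | zero => intro _ i hi; interval_cases i; exact le_rfl
  | succ m ih =>
    intro hm i hi
    rcases Nat.eq_or_lt_of_le hi with rfl | hlt
    · exact le_rfl
    · exact le_trans (ih (by omega) i (by omega)) (P.mono m (by omega)).le

lemma t_mem_Icc (P : Partition) {i : ℕ} (hi : i ≤ P.n) : P.t i ∈ Set.Icc (0:ℝ) 1 := by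
  constructor
  · rw [← P.t0]; exact P.t_mono i hi 0 (Nat.zero_le _)
  · rw [← P.tn]; exact P.t_mono P.n le_rfl i hi

/-- insert a new point `s` strictly between `t j` and `t (j+1)`. -/
def insertPt (P : Partition) (s : ℝ) (j : ℕ) (hj : j < P.n)
    (h1 : P.t j < s) (h2 : s < P.t (j + 1)) : Partition where
  n := P.n + 1
  npos := Nat.succ_pos _
  t := fun i => if i ≤ j then P.t i else if i = j + 1 then s else P.t (i - 1)
  t0 := by simp [P.t0]
  tn := by
    have : ¬ (P.n + 1 ≤ j) := by omega
    have h2' : ¬ (P.n + 1 = j + 1) := by omega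
    simp only [this, h2', if_false]
    simpa using P.tn
  mono := by
    intro i hi
    rcases lt_trichotomy i j with hij | rfl | hij
    · have : i + 1 ≤ j := by omega
      simp only [if_pos hij.le, if_pos this]
      exact P.mono i (by omega)
    · simp only [le_refl, if_pos, if_neg (by omega : ¬ i + 1 ≤ i), if_pos rfl]
      exact h1
    · rcases Nat.eq_or_lt_of_le hij with rfl | hij2
      · simp only [if_neg (by omega : ¬ j + 1 ≤ j), if_pos rfl,
          if_neg (by omega : ¬ j + 1 + 1 ≤ j), if_neg (by omega : ¬ j + 1 + 1 = j + 1)]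
        simpa using h2
      · simp only [if_neg (by omega : ¬ i ≤ j), if_neg (by omega : ¬ i = j + 1),
          if_neg (by omega : ¬ i + 1 ≤ j), if_neg (by omega : ¬ i + 1 = j + 1)]
        have e : i - 1 + 1 = i := by omega
        have e2 : i + 1 - 1 = i - 1 + 1 := by omega
        rw [e2]
        exact P.mono (i - 1) (by omega)

lemma insertPt_t_le (P : Partition) (s : ℝ) (j : ℕ) (hj : j < P.n)
    (h1 : P.t j < s) (h2 : s < P.t (j + 1)) {i : ℕ} (hij : i ≤ j) :
    (P.insertPt s j hj h1 h2).t i = P.t i := by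
  simp [insertPt, if_pos hij]

lemma insertPt_t_eq (P : Partition) (s : ℝ) (j : ℕ) (hj : j < P.n)
    (h1 : P.t j < s) (h2 : s < P.t (j + 1)) :
    (P.insertPt s j hj h1 h2).t (j + 1) = s := by
  simp [insertPt, if_neg (by omega : ¬ j + 1 ≤ j)]

lemma insertPt_t_gt (P : Partition) (s : ℝ) (j : ℕ) (hj : j < P.n)
    (h1 : P.t j < s) (h2 : s < P.t (j + 1)) {i : ℕ} (hij : j + 2 ≤ i) :
    (P.insertPt s j hj h1 h2).t i = P.t (i - 1) := by
  simp [insertPt, if_neg (by omega : ¬ i ≤ j), if_neg (by omega : ¬ i = j + 1)]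

end Partition

section Sums
variable (A B : IR) (h : sll A B) (F : IR → IR) (C₀ D₀ : IR)
  (hFb : ∀ X ∈ box A B, C₀ ≤ F X ∧ F X ≤ D₀)

include h in
lemma box_sub_box {t t' : ℝ} (ht : t ∈ Set.Icc (0:ℝ) 1) (ht' : t' ∈ Set.Icc (0:ℝ) 1) :
    box (seg A B t) (seg A B t') ⊆ box A B := by
  rintro X ⟨hX1, hX2⟩
  constructor
  · calc A = seg A B 0 := (seg_zero A B).symm
      _ ≤ seg A B t := seg_mono A B h (Set.left_mem_Icc.2 zero_le_one) ht ht.1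
      _ ≤ X := hX1
  · calc X ≤ seg A B t' := hX2
      _ ≤ seg A B 1 := seg_mono A B h ht' (Set.right_mem_Icc.2 zero_le_one) ht'.2
      _ = B := seg_one A B

lemma box_mono {u u' v v' : IR} (hu : u ≤ u') (hv : v' ≤ v) : box u' v' ⊆ box u v := by
  rintro X ⟨h1, h2⟩; exact ⟨hu.trans h1, h2.trans hv⟩

lemma self_mem_box {u v : IR} (huv : u ≤ v) : u ∈ box u v := ⟨le_rfl, huv⟩

include hFb in
lemma bddBelow_lo {S : Set IR} (hS : S ⊆ box A B) : BddBelow (lo '' (F '' S)) := by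
  refine ⟨lo C₀, ?_⟩
  rintro x ⟨Y, ⟨X, hX, rfl⟩, rfl⟩
  exact ((le_iff _ _).1 (hFb X (hS hX)).1).1

include hFb in
lemma bddBelow_hi {S : Set IR} (hS : S ⊆ box A B) : BddBelow (hi '' (F '' S)) := by
  refine ⟨hi C₀, ?_⟩
  rintro x ⟨Y, ⟨X, hX, rfl⟩, rfl⟩
  exact ((le_iff _ _).1 (hFb X (hS hX)).1).2

include hFb in
lemma bddAbove_lo {S : Set IR} (hS : S ⊆ box A B) : BddAbove (lo '' (F '' S)) := by
  refine ⟨lo D₀, ?_⟩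
  rintro x ⟨Y, ⟨X, hX, rfl⟩, rfl⟩
  exact ((le_iff _ _).1 (hFb X (hS hX)).2).1

include hFb in
lemma bddAbove_hi {S : Set IR} (hS : S ⊆ box A B) : BddAbove (hi '' (F '' S)) := by
  refine ⟨hi D₀, ?_⟩
  rintro x ⟨Y, ⟨X, hX, rfl⟩, rfl⟩
  exact ((le_iff _ _).1 (hFb X (hS hX)).2).2

include hFb in
lemma infS_antitone {S T : Set IR} (hST : S ⊆ T) (hS : S.Nonempty) (hT : T ⊆ box A B) :
    infS (F '' T) ≤ infS (F '' S) := by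
  have hsub : F '' S ⊆ F '' T := Set.image_mono (f := F) hST
  constructor
  · exact csInf_le_csInf (bddBelow_lo A B F C₀ D₀ hFb hT) ((hS.image F).image lo)
      (Set.image_mono (f := lo) hsub)
  · exact csInf_le_csInf (bddBelow_hi A B F C₀ D₀ hFb hT) ((hS.image F).image hi)
      (Set.image_mono (f := hi) hsub)

include hFb in
lemma supS_monotone {S T : Set IR} (hST : S ⊆ T) (hS : S.Nonempty) (hT : T ⊆ box A B) :
    supS (F '' S) ≤ supS (F '' T) := by
  have hsub : F '' S ⊆ F '' T := Set.image_mono (f := F) hST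
  constructor
  · exact csSup_le_csSup (bddAbove_lo A B F C₀ D₀ hFb hT) ((hS.image F).image lo)
      (Set.image_mono (f := lo) hsub)
  · exact csSup_le_csSup (bddAbove_hi A B F C₀ D₀ hFb hT) ((hS.image F).image hi)
      (Set.image_mono (f := hi) hsub)

include h hFb in
lemma split_lower {u c v : ℝ} (hu : u ∈ Set.Icc (0:ℝ) 1) (hv : v ∈ Set.Icc (0:ℝ) 1)
    (huc : u ≤ c) (hcv : c ≤ v) :
    dM (seg A B u) (seg A B v) • infS (F '' box (seg A B u) (seg A B v)) ≤
      dM (seg A B u) (seg A B c) • infS (F '' box (seg A B u) (seg A B c)) +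
      dM (seg A B c) (seg A B v) • infS (F '' box (seg A B c) (seg A B v)) := by
  have hc : c ∈ Set.Icc (0:ℝ) 1 := ⟨hu.1.trans huc, hcv.trans hv.2⟩
  set m := infS (F '' box (seg A B u) (seg A B v)) with hm
  set m1 := infS (F '' box (seg A B u) (seg A B c)) with hm1
  set m2 := infS (F '' box (seg A B c) (seg A B v)) with hm2
  have hbig : box (seg A B u) (seg A B v) ⊆ box A B := box_sub_box A B h hu hv
  have hs1 : box (seg A B u) (seg A B c) ⊆ box (seg A B u) (seg A B v) :=
    box_mono le_rfl (seg_mono A B h hc hv hcv)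
  have hs2 : box (seg A B c) (seg A B v) ⊆ box (seg A B u) (seg A B v) :=
    box_mono (seg_mono A B h hu hc huc) le_rfl
  have hn1 : (box (seg A B u) (seg A B c)).Nonempty :=
    ⟨seg A B u, self_mem_box (seg_mono A B h hu hc huc)⟩
  have hn2 : (box (seg A B c) (seg A B v)).Nonempty :=
    ⟨seg A B c, self_mem_box (seg_mono A B h hc hv hcv)⟩
  have hmm1 : m ≤ m1 := infS_antitone A B F C₀ D₀ hFb hs1 hn1 hbig
  have hmm2 : m ≤ m2 := infS_antitone A B F C₀ D₀ hFb hs2 hn2 hbig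
  have hd : dM (seg A B u) (seg A B v) =
      dM (seg A B u) (seg A B c) + dM (seg A B c) (seg A B v) := by
    rw [dM_seg A B h hu hv (huc.trans hcv), dM_seg A B h hu hc huc, dM_seg A B h hc hv hcv]
    ring
  have hd1 : 0 ≤ dM (seg A B u) (seg A B c) := by
    rw [dM_seg A B h hu hc huc]
    exact mul_nonneg (by linarith) (le_max_of_le_left (by linarith [h.1]))
  have hd2 : 0 ≤ dM (seg A B c) (seg A B v) := by
    rw [dM_seg A B h hc hv hcv]
    exact mul_nonneg (by linarith) (le_max_of_le_left (by linarith [h.1]))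
  rw [hd, add_smul]
  refine add_le_add ?_ ?_
  · exact ⟨mul_le_mul_of_nonneg_left hmm1.1 hd1, mul_le_mul_of_nonneg_left hmm1.2 hd1⟩
  · exact ⟨mul_le_mul_of_nonneg_left hmm2.1 hd2, mul_le_mul_of_nonneg_left hmm2.2 hd2⟩

include h hFb in
lemma split_upper {u c v : ℝ} (hu : u ∈ Set.Icc (0:ℝ) 1) (hv : v ∈ Set.Icc (0:ℝ) 1)
    (huc : u ≤ c) (hcv : c ≤ v) :
    dM (seg A B u) (seg A B c) • supS (F '' box (seg A B u) (seg A B c)) +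
      dM (seg A B c) (seg A B v) • supS (F '' box (seg A B c) (seg A B v)) ≤
      dM (seg A B u) (seg A B v) • supS (F '' box (seg A B u) (seg A B v)) := by
  have hc : c ∈ Set.Icc (0:ℝ) 1 := ⟨hu.1.trans huc, hcv.trans hv.2⟩
  set m := supS (F '' box (seg A B u) (seg A B v)) with hm
  set m1 := supS (F '' box (seg A B u) (seg A B c)) with hm1
  set m2 := supS (F '' box (seg A B c) (seg A B v)) with hm2
  have hbig : box (seg A B u) (seg A B v) ⊆ box A B := box_sub_box A B h hu hv
  have hs1 : box (seg A B u) (seg A B c) ⊆ box (seg A B u) (seg A B v) :=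
    box_mono le_rfl (seg_mono A B h hc hv hcv)
  have hs2 : box (seg A B c) (seg A B v) ⊆ box (seg A B u) (seg A B v) :=
    box_mono (seg_mono A B h hu hc huc) le_rfl
  have hn1 : (box (seg A B u) (seg A B c)).Nonempty :=
    ⟨seg A B u, self_mem_box (seg_mono A B h hu hc huc)⟩
  have hn2 : (box (seg A B c) (seg A B v)).Nonempty :=
    ⟨seg A B c, self_mem_box (seg_mono A B h hc hv hcv)⟩
  have hmm1 : m1 ≤ m := supS_monotone A B F C₀ D₀ hFb hs1 hn1 hbig
  have hmm2 : m2 ≤ m := supS_monotone A B F C₀ D₀ hFb hs2 hn2 hbig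
  have hd : dM (seg A B u) (seg A B v) =
      dM (seg A B u) (seg A B c) + dM (seg A B c) (seg A B v) := by
    rw [dM_seg A B h hu hv (huc.trans hcv), dM_seg A B h hu hc huc, dM_seg A B h hc hv hcv]
    ring
  have hd1 : 0 ≤ dM (seg A B u) (seg A B c) := by
    rw [dM_seg A B h hu hc huc]
    exact mul_nonneg (by linarith) (le_max_of_le_left (by linarith [h.1]))
  have hd2 : 0 ≤ dM (seg A B c) (seg A B v) := by
    rw [dM_seg A B h hc hv hcv]
    exact mul_nonneg (by linarith) (le_max_of_le_left (by linarith [h.1]))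
  rw [hd, add_smul]
  refine add_le_add ?_ ?_
  · exact ⟨mul_le_mul_of_nonneg_left hmm1.1 hd1, mul_le_mul_of_nonneg_left hmm1.2 hd1⟩
  · exact ⟨mul_le_mul_of_nonneg_left hmm2.1 hd2, mul_le_mul_of_nonneg_left hmm2.2 hd2⟩

end Sums

lemma sum_insert_le {M : Type*} [AddCommMonoid M] [PartialOrder M] [IsOrderedAddMonoid M] (a a' : ℕ → M) (n j : ℕ) (hj : j < n)
    (h1 : ∀ k, k < j → a' k = a k) (h2 : a j ≤ a' j + a' (j + 1))
    (h3 : ∀ k, j + 1 ≤ k → k < n → a' (k + 1) = a k) :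
    ∑ k ∈ Finset.range n, a k ≤ ∑ k ∈ Finset.range (n + 1), a' k := by
  have key : ∑ k ∈ Finset.Ico (j+2) (n+1), a' k = ∑ k ∈ Finset.Ico (j+1) n, a k := by
    rw [Finset.sum_Ico_eq_sum_range, Finset.sum_Ico_eq_sum_range]
    have hn : n + 1 - (j + 2) = n - (j + 1) := by omega
    rw [hn]
    refine Finset.sum_congr rfl fun i hi => ?_
    rw [Finset.mem_range] at hi
    have e : j + 2 + i = (j + 1 + i) + 1 := by omega
    rw [e, h3 (j+1+i) (by omega) (by omega)]
  have e1 : ∑ k ∈ Finset.range (n+1), a' k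
      = ∑ k ∈ Finset.range (j+2), a' k + ∑ k ∈ Finset.Ico (j+2) (n+1), a' k := by
    rw [Finset.range_eq_Ico, ← Finset.sum_Ico_consecutive _ (by omega : 0 ≤ j+2)
      (by omega : j+2 ≤ n+1)]
    rw [Finset.range_eq_Ico]
  have e2 : ∑ k ∈ Finset.range n, a k
      = ∑ k ∈ Finset.range (j+1), a k + ∑ k ∈ Finset.Ico (j+1) n, a k := by
    rw [Finset.range_eq_Ico, ← Finset.sum_Ico_consecutive _ (by omega : 0 ≤ j+1)
      (by omega : j+1 ≤ n)]
    rw [Finset.range_eq_Ico]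
  have e3 : ∑ k ∈ Finset.range j, a' k = ∑ k ∈ Finset.range j, a k :=
    Finset.sum_congr rfl fun k hk => h1 k (Finset.mem_range.1 hk)
  rw [e1, e2, key, Finset.sum_range_succ (f := a'), Finset.sum_range_succ (f := a'),
    Finset.sum_range_succ (f := a), e3]
  refine add_le_add_left ?_ _
  rw [add_assoc]
  exact add_le_add_right h2 _

lemma sum_insert_ge {M : Type*} [AddCommMonoid M] [PartialOrder M] [IsOrderedAddMonoid M] (a a' : ℕ → M) (n j : ℕ) (hj : j < n)
    (h1 : ∀ k, k < j → a' k = a k) (h2 : a' j + a' (j + 1) ≤ a j)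
    (h3 : ∀ k, j + 1 ≤ k → k < n → a' (k + 1) = a k) :
    ∑ k ∈ Finset.range (n + 1), a' k ≤ ∑ k ∈ Finset.range n, a k :=
  sum_insert_le (M := Mᵒᵈ) a a' n j hj h1 h2 h3

section Main
variable (A B : IR) (h : sll A B) (F : IR → IR) (C₀ D₀ : IR)
  (hFb : ∀ X ∈ box A B, C₀ ≤ F X ∧ F X ≤ D₀)

/-- the term functions of the Riemann sums -/
noncomputable def lterm (P : Partition) (k : ℕ) : ℝ × ℝ :=
  dM (seg A B (P.t k)) (seg A B (P.t (k + 1))) •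
      infS (F '' box (seg A B (P.t k)) (seg A B (P.t (k + 1))))

noncomputable def uterm (P : Partition) (k : ℕ) : ℝ × ℝ :=
  dM (seg A B (P.t k)) (seg A B (P.t (k + 1))) •
      supS (F '' box (seg A B (P.t k)) (seg A B (P.t (k + 1))))

include h hFb in
lemma lowerSum_le_insertPt (P : Partition) (s : ℝ) (j : ℕ) (hj : j < P.n)
    (h1 : P.t j < s) (h2 : s < P.t (j + 1)) :
    lowerSum A B F P ≤ lowerSum A B F (P.insertPt s j hj h1 h2) := by
  set Q := P.insertPt s j hj h1 h2 with hQ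
  have hQn : Q.n = P.n + 1 := rfl
  show ∑ k ∈ Finset.range P.n, lterm A B F P k ≤ ∑ k ∈ Finset.range Q.n, lterm A B F Q k
  rw [hQn]
  refine sum_insert_le _ _ P.n j hj ?_ ?_ ?_
  · intro k hk
    unfold lterm
    rw [P.insertPt_t_le s j hj h1 h2 (by omega : k ≤ j),
      P.insertPt_t_le s j hj h1 h2 (by omega : k + 1 ≤ j)]
  · unfold lterm
    have e1 : Q.t j = P.t j := P.insertPt_t_le s j hj h1 h2 le_rfl
    have e2 : Q.t (j + 1) = s := P.insertPt_t_eq s j hj h1 h2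
    have e3 : Q.t (j + 1 + 1) = P.t (j + 1) := by
      rw [P.insertPt_t_gt s j hj h1 h2 (by omega : j + 2 ≤ j + 1 + 1)]; congr 1
    rw [e1, e2, e3]
    exact split_lower A B h F C₀ D₀ hFb (P.t_mem_Icc (by omega)) (P.t_mem_Icc (by omega))
      h1.le h2.le
  · intro k hk1 hk2
    unfold lterm
    have e1 : Q.t (k + 1) = P.t k := by
      rw [P.insertPt_t_gt s j hj h1 h2 (by omega : j + 2 ≤ k + 1)]; congr 1
    have e2 : Q.t (k + 1 + 1) = P.t (k + 1) := by
      rw [P.insertPt_t_gt s j hj h1 h2 (by omega : j + 2 ≤ k + 1 + 1)]; congr 1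
    rw [e1, e2]

include h hFb in
lemma insertPt_le_upperSum (P : Partition) (s : ℝ) (j : ℕ) (hj : j < P.n)
    (h1 : P.t j < s) (h2 : s < P.t (j + 1)) :
    upperSum A B F (P.insertPt s j hj h1 h2) ≤ upperSum A B F P := by
  set Q := P.insertPt s j hj h1 h2 with hQ
  have hQn : Q.n = P.n + 1 := rfl
  show ∑ k ∈ Finset.range Q.n, uterm A B F Q k ≤ ∑ k ∈ Finset.range P.n, uterm A B F P k
  rw [hQn]
  refine sum_insert_ge _ _ P.n j hj ?_ ?_ ?_
  · intro k hk
    unfold uterm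
    rw [P.insertPt_t_le s j hj h1 h2 (by omega : k ≤ j),
      P.insertPt_t_le s j hj h1 h2 (by omega : k + 1 ≤ j)]
  · unfold uterm
    have e1 : Q.t j = P.t j := P.insertPt_t_le s j hj h1 h2 le_rfl
    have e2 : Q.t (j + 1) = s := P.insertPt_t_eq s j hj h1 h2
    have e3 : Q.t (j + 1 + 1) = P.t (j + 1) := by
      rw [P.insertPt_t_gt s j hj h1 h2 (by omega : j + 2 ≤ j + 1 + 1)]; congr 1
    rw [e1, e2, e3]
    exact split_upper A B h F C₀ D₀ hFb (P.t_mem_Icc (by omega)) (P.t_mem_Icc (by omega))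
      h1.le h2.le
  · intro k hk1 hk2
    unfold uterm
    have e1 : Q.t (k + 1) = P.t k := by
      rw [P.insertPt_t_gt s j hj h1 h2 (by omega : j + 2 ≤ k + 1)]; congr 1
    have e2 : Q.t (k + 1 + 1) = P.t (k + 1) := by
      rw [P.insertPt_t_gt s j hj h1 h2 (by omega : j + 2 ≤ k + 1 + 1)]; congr 1
    rw [e1, e2]

include h hFb in
lemma exists_through (s : ℝ) (hs : s ∈ Set.Ioo (0:ℝ) 1) (P : Partition) :
    ∃ Q : Partition, seg A B s ∈ Partition.ipts A B Q ∧
      lowerSum A B F P ≤ lowerSum A B F Q ∧ upperSum A B F Q ≤ upperSum A B F P := by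
  by_cases hmem : ∃ i ≤ P.n, P.t i = s
  · obtain ⟨i, hi, hti⟩ := hmem
    exact ⟨P, ⟨i, hi, by show seg A B (P.t i) = seg A B s; rw [hti]⟩, le_rfl, le_rfl⟩
  · push_neg at hmem
    classical
    set j := Nat.findGreatest (fun i => P.t i < s) P.n with hj
    have h0 : P.t 0 < s := by rw [P.t0]; exact hs.1
    have hjs : P.t j < s :=
      Nat.findGreatest_spec (P := fun i => P.t i < s) (Nat.zero_le P.n) h0
    have hjn : j ≤ P.n := Nat.findGreatest_le _
    have hjlt : j < P.n := by
      rcases eq_or_lt_of_le hjn with he | hlt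
      · exfalso; rw [he, P.tn] at hjs; linarith [hs.2]
      · exact hlt
    have hs2 : s < P.t (j + 1) := by
      have hne : P.t (j + 1) ≠ s := hmem (j + 1) (by omega)
      have hng : ¬ (P.t (j + 1) < s) :=
        Nat.findGreatest_is_greatest (P := fun i => P.t i < s) (Nat.lt_succ_self j) (by omega)
      exact lt_of_le_of_ne (not_lt.1 hng) (Ne.symm hne)
    refine ⟨P.insertPt s j hjlt hjs hs2, ?_, ?_, ?_⟩
    · refine ⟨j + 1, Set.mem_Iic.2 (show j + 1 ≤ (P.insertPt s j hjlt hjs hs2).n from by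
        show j + 1 ≤ P.n + 1; omega), ?_⟩
      show seg A B ((P.insertPt s j hjlt hjs hs2).t (j+1)) = seg A B s
      rw [P.insertPt_t_eq s j hjlt hjs hs2]
    · exact lowerSum_le_insertPt A B h F C₀ D₀ hFb P s j hjlt hjs hs2
    · exact insertPt_le_upperSum A B h F C₀ D₀ hFb P s j hjlt hjs hs2

include h hFb in
lemma seg_in_box {u : ℝ} (hu : u ∈ Set.Icc (0:ℝ) 1) : seg A B u ∈ box A B :=
  box_sub_box A B h hu hu (self_mem_box le_rfl)

include h hFb in
lemma bddAbove_lowerSum_fst :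
    BddAbove (Set.range fun P : Partition => (lowerSum A B F P).1) := by
  set M := max (lo B - lo A) (hi B - hi A) with hM
  have hM0 : 0 ≤ M := le_max_of_le_left (by linarith [h.1])
  refine ⟨M * lo D₀, ?_⟩
  rintro x ⟨P, rfl⟩
  beta_reduce
  have e0 : (lowerSum A B F P).1 = ∑ k ∈ Finset.range P.n,
      dM (seg A B (P.t k)) (seg A B (P.t (k + 1))) *
        (infS (F '' box (seg A B (P.t k)) (seg A B (P.t (k + 1))))).1 := by
    rw [lowerSum, Prod.fst_sum]
    simp only [Prod.smul_fst, smul_eq_mul]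
  rw [e0]
  calc ∑ k ∈ Finset.range P.n,
      dM (seg A B (P.t k)) (seg A B (P.t (k + 1))) *
        (infS (F '' box (seg A B (P.t k)) (seg A B (P.t (k + 1))))).1
      ≤ ∑ k ∈ Finset.range P.n, (P.t (k+1) * (M * lo D₀) - P.t k * (M * lo D₀)) := by
        refine Finset.sum_le_sum fun k hk => ?_
        rw [Finset.mem_range] at hk
        have hk1 : k ≤ P.n := by omega
        have hk2 : k + 1 ≤ P.n := by omega
        have hmem1 := P.t_mem_Icc hk1
        have hmem2 := P.t_mem_Icc hk2
        have hmon : P.t k ≤ P.t (k+1) := (P.mono k hk).le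
        have hd : dM (seg A B (P.t k)) (seg A B (P.t (k + 1))) = (P.t (k+1) - P.t k) * M :=
          dM_seg A B h hmem1 hmem2 hmon
        have hd0 : 0 ≤ dM (seg A B (P.t k)) (seg A B (P.t (k + 1))) := by
          rw [hd]; exact mul_nonneg (by linarith) hM0
        have hinf : (infS (F '' box (seg A B (P.t k)) (seg A B (P.t (k + 1))))).1 ≤ lo D₀ := by
          refine le_trans (csInf_le (bddBelow_lo A B F C₀ D₀ hFb
              (box_sub_box A B h hmem1 hmem2))
            ⟨F (seg A B (P.t k)), ⟨seg A B (P.t k),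
              self_mem_box (seg_mono A B h hmem1 hmem2 hmon), rfl⟩, rfl⟩) ?_
          exact ((le_iff _ _).1 (hFb _ (seg_in_box A B h F C₀ D₀ hFb hmem1)).2).1
        calc dM (seg A B (P.t k)) (seg A B (P.t (k + 1))) *
            (infS (F '' box (seg A B (P.t k)) (seg A B (P.t (k + 1))))).1
            ≤ dM (seg A B (P.t k)) (seg A B (P.t (k + 1))) * lo D₀ :=
              mul_le_mul_of_nonneg_left hinf hd0
          _ = P.t (k+1) * (M * lo D₀) - P.t k * (M * lo D₀) := by rw [hd]; ring
    _ = P.t P.n * (M * lo D₀) - P.t 0 * (M * lo D₀) :=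
        Finset.sum_range_sub (fun k => P.t k * (M * lo D₀)) P.n
    _ = M * lo D₀ := by rw [P.tn, P.t0]; ring

include h hFb in
lemma bddAbove_lowerSum_snd :
    BddAbove (Set.range fun P : Partition => (lowerSum A B F P).2) := by
  set M := max (lo B - lo A) (hi B - hi A) with hM
  have hM0 : 0 ≤ M := le_max_of_le_left (by linarith [h.1])
  refine ⟨M * hi D₀, ?_⟩
  rintro x ⟨P, rfl⟩
  beta_reduce
  have e0 : (lowerSum A B F P).2 = ∑ k ∈ Finset.range P.n,
      dM (seg A B (P.t k)) (seg A B (P.t (k + 1))) *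
        (infS (F '' box (seg A B (P.t k)) (seg A B (P.t (k + 1))))).2 := by
    rw [lowerSum, Prod.snd_sum]
    simp only [Prod.smul_snd, smul_eq_mul]
  rw [e0]
  calc ∑ k ∈ Finset.range P.n,
      dM (seg A B (P.t k)) (seg A B (P.t (k + 1))) *
        (infS (F '' box (seg A B (P.t k)) (seg A B (P.t (k + 1))))).2
      ≤ ∑ k ∈ Finset.range P.n, (P.t (k+1) * (M * hi D₀) - P.t k * (M * hi D₀)) := by
        refine Finset.sum_le_sum fun k hk => ?_
        rw [Finset.mem_range] at hk
        have hk1 : k ≤ P.n := by omega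
        have hk2 : k + 1 ≤ P.n := by omega
        have hmem1 := P.t_mem_Icc hk1
        have hmem2 := P.t_mem_Icc hk2
        have hmon : P.t k ≤ P.t (k+1) := (P.mono k hk).le
        have hd : dM (seg A B (P.t k)) (seg A B (P.t (k + 1))) = (P.t (k+1) - P.t k) * M :=
          dM_seg A B h hmem1 hmem2 hmon
        have hd0 : 0 ≤ dM (seg A B (P.t k)) (seg A B (P.t (k + 1))) := by
          rw [hd]; exact mul_nonneg (by linarith) hM0
        have hinf : (infS (F '' box (seg A B (P.t k)) (seg A B (P.t (k + 1))))).2 ≤ hi D₀ := by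
          refine le_trans (csInf_le (bddBelow_hi A B F C₀ D₀ hFb
              (box_sub_box A B h hmem1 hmem2))
            ⟨F (seg A B (P.t k)), ⟨seg A B (P.t k),
              self_mem_box (seg_mono A B h hmem1 hmem2 hmon), rfl⟩, rfl⟩) ?_
          exact ((le_iff _ _).1 (hFb _ (seg_in_box A B h F C₀ D₀ hFb hmem1)).2).2
        calc dM (seg A B (P.t k)) (seg A B (P.t (k + 1))) *
            (infS (F '' box (seg A B (P.t k)) (seg A B (P.t (k + 1))))).2
            ≤ dM (seg A B (P.t k)) (seg A B (P.t (k + 1))) * hi D₀ :=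
              mul_le_mul_of_nonneg_left hinf hd0
          _ = P.t (k+1) * (M * hi D₀) - P.t k * (M * hi D₀) := by rw [hd]; ring
    _ = P.t P.n * (M * hi D₀) - P.t 0 * (M * hi D₀) :=
        Finset.sum_range_sub (fun k => P.t k * (M * hi D₀)) P.n
    _ = M * hi D₀ := by rw [P.tn, P.t0]; ring

include h hFb in
lemma bddBelow_upperSum_fst :
    BddBelow (Set.range fun P : Partition => (upperSum A B F P).1) := by
  set M := max (lo B - lo A) (hi B - hi A) with hM
  have hM0 : 0 ≤ M := le_max_of_le_left (by linarith [h.1])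
  refine ⟨M * lo C₀, ?_⟩
  rintro x ⟨P, rfl⟩
  beta_reduce
  have e0 : (upperSum A B F P).1 = ∑ k ∈ Finset.range P.n,
      dM (seg A B (P.t k)) (seg A B (P.t (k + 1))) *
        (supS (F '' box (seg A B (P.t k)) (seg A B (P.t (k + 1))))).1 := by
    rw [upperSum, Prod.fst_sum]
    simp only [Prod.smul_fst, smul_eq_mul]
  rw [e0]
  calc (M * lo C₀ : ℝ)
      = P.t P.n * (M * lo C₀) - P.t 0 * (M * lo C₀) := by rw [P.tn, P.t0]; ring
    _ = ∑ k ∈ Finset.range P.n, (P.t (k+1) * (M * lo C₀) - P.t k * (M * lo C₀)) :=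
        (Finset.sum_range_sub (fun k => P.t k * (M * lo C₀)) P.n).symm
    _ ≤ ∑ k ∈ Finset.range P.n,
      dM (seg A B (P.t k)) (seg A B (P.t (k + 1))) *
        (supS (F '' box (seg A B (P.t k)) (seg A B (P.t (k + 1))))).1 := by
        refine Finset.sum_le_sum fun k hk => ?_
        rw [Finset.mem_range] at hk
        have hk1 : k ≤ P.n := by omega
        have hk2 : k + 1 ≤ P.n := by omega
        have hmem1 := P.t_mem_Icc hk1
        have hmem2 := P.t_mem_Icc hk2
        have hmon : P.t k ≤ P.t (k+1) := (P.mono k hk).le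
        have hd : dM (seg A B (P.t k)) (seg A B (P.t (k + 1))) = (P.t (k+1) - P.t k) * M :=
          dM_seg A B h hmem1 hmem2 hmon
        have hd0 : 0 ≤ dM (seg A B (P.t k)) (seg A B (P.t (k + 1))) := by
          rw [hd]; exact mul_nonneg (by linarith) hM0
        have hsup : lo C₀ ≤ (supS (F '' box (seg A B (P.t k)) (seg A B (P.t (k + 1))))).1 := by
          refine le_trans ?_ (le_csSup (bddAbove_lo A B F C₀ D₀ hFb
              (box_sub_box A B h hmem1 hmem2))
            ⟨F (seg A B (P.t k)), ⟨seg A B (P.t k),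
              self_mem_box (seg_mono A B h hmem1 hmem2 hmon), rfl⟩, rfl⟩)
          exact ((le_iff _ _).1 (hFb _ (seg_in_box A B h F C₀ D₀ hFb hmem1)).1).1
        calc P.t (k+1) * (M * lo C₀) - P.t k * (M * lo C₀)
            = dM (seg A B (P.t k)) (seg A B (P.t (k + 1))) * lo C₀ := by rw [hd]; ring
          _ ≤ dM (seg A B (P.t k)) (seg A B (P.t (k + 1))) *
              (supS (F '' box (seg A B (P.t k)) (seg A B (P.t (k + 1))))).1 :=
              mul_le_mul_of_nonneg_left hsup hd0

include h hFb in
lemma bddBelow_upperSum_snd :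
    BddBelow (Set.range fun P : Partition => (upperSum A B F P).2) := by
  set M := max (lo B - lo A) (hi B - hi A) with hM
  have hM0 : 0 ≤ M := le_max_of_le_left (by linarith [h.1])
  refine ⟨M * hi C₀, ?_⟩
  rintro x ⟨P, rfl⟩
  beta_reduce
  have e0 : (upperSum A B F P).2 = ∑ k ∈ Finset.range P.n,
      dM (seg A B (P.t k)) (seg A B (P.t (k + 1))) *
        (supS (F '' box (seg A B (P.t k)) (seg A B (P.t (k + 1))))).2 := by
    rw [upperSum, Prod.snd_sum]
    simp only [Prod.smul_snd, smul_eq_mul]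
  rw [e0]
  calc (M * hi C₀ : ℝ)
      = P.t P.n * (M * hi C₀) - P.t 0 * (M * hi C₀) := by rw [P.tn, P.t0]; ring
    _ = ∑ k ∈ Finset.range P.n, (P.t (k+1) * (M * hi C₀) - P.t k * (M * hi C₀)) :=
        (Finset.sum_range_sub (fun k => P.t k * (M * hi C₀)) P.n).symm
    _ ≤ ∑ k ∈ Finset.range P.n,
      dM (seg A B (P.t k)) (seg A B (P.t (k + 1))) *
        (supS (F '' box (seg A B (P.t k)) (seg A B (P.t (k + 1))))).2 := by
        refine Finset.sum_le_sum fun k hk => ?_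
        rw [Finset.mem_range] at hk
        have hk1 : k ≤ P.n := by omega
        have hk2 : k + 1 ≤ P.n := by omega
        have hmem1 := P.t_mem_Icc hk1
        have hmem2 := P.t_mem_Icc hk2
        have hmon : P.t k ≤ P.t (k+1) := (P.mono k hk).le
        have hd : dM (seg A B (P.t k)) (seg A B (P.t (k + 1))) = (P.t (k+1) - P.t k) * M :=
          dM_seg A B h hmem1 hmem2 hmon
        have hd0 : 0 ≤ dM (seg A B (P.t k)) (seg A B (P.t (k + 1))) := by
          rw [hd]; exact mul_nonneg (by linarith) hM0
        have hsup : hi C₀ ≤ (supS (F '' box (seg A B (P.t k)) (seg A B (P.t (k + 1))))).2 := by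
          refine le_trans ?_ (le_csSup (bddAbove_hi A B F C₀ D₀ hFb
              (box_sub_box A B h hmem1 hmem2))
            ⟨F (seg A B (P.t k)), ⟨seg A B (P.t k),
              self_mem_box (seg_mono A B h hmem1 hmem2 hmon), rfl⟩, rfl⟩)
          exact ((le_iff _ _).1 (hFb _ (seg_in_box A B h F C₀ D₀ hFb hmem1)).1).2
        calc P.t (k+1) * (M * hi C₀) - P.t k * (M * hi C₀)
            = dM (seg A B (P.t k)) (seg A B (P.t (k + 1))) * hi C₀ := by rw [hd]; ring
          _ ≤ dM (seg A B (P.t k)) (seg A B (P.t (k + 1))) *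
              (supS (F '' box (seg A B (P.t k)) (seg A B (P.t (k + 1))))).2 :=
              mul_le_mul_of_nonneg_left hsup hd0

end Main

/-- the partition `0 < s < 1`. -/
def twoPart (s : ℝ) (hs0 : 0 < s) (hs1 : s < 1) : Partition where
  n := 2
  npos := by norm_num
  t := fun i => if i = 0 then 0 else if i = 1 then s else 1
  t0 := by norm_num
  tn := by norm_num
  mono := by
    intro i hi
    interval_cases i <;> simp [hs0, hs1]

lemma csSup_range_eq {g : Partition → ℝ} {S : Set Partition} (hS : S.Nonempty)
    (hb : BddAbove (Set.range g)) (href : ∀ p, ∃ q ∈ S, g p ≤ g q) :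
    sSup (Set.range g) = sSup (g '' S) := by
  obtain ⟨p0, hp0⟩ := hS
  apply le_antisymm
  · refine csSup_le ⟨g p0, ⟨p0, rfl⟩⟩ ?_
    rintro x ⟨p, rfl⟩
    obtain ⟨q, hq, hle⟩ := href p
    exact hle.trans (le_csSup (hb.mono (Set.image_subset_range g S)) ⟨q, hq, rfl⟩)
  · exact csSup_le_csSup hb ⟨g p0, ⟨p0, hp0, rfl⟩⟩ (Set.image_subset_range g S)

lemma csInf_range_eq {g : Partition → ℝ} {S : Set Partition} (hS : S.Nonempty)
    (hb : BddBelow (Set.range g)) (href : ∀ p, ∃ q ∈ S, g q ≤ g p) :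
    sInf (Set.range g) = sInf (g '' S) := by
  obtain ⟨p0, hp0⟩ := hS
  apply le_antisymm
  · exact csInf_le_csInf hb ⟨g p0, ⟨p0, hp0, rfl⟩⟩ (Set.image_subset_range g S)
  · refine le_csInf ⟨g p0, ⟨p0, rfl⟩⟩ ?_
    rintro x ⟨p, rfl⟩
    obtain ⟨q, hq, hle⟩ := href p
    exact (csInf_le (hb.mono (Set.image_subset_range g S)) ⟨q, hq, rfl⟩).trans hle

end IR
open IR in
/-- Let `A ≪ B`, `F` bounded, `C = A + s(B−A)` with `s ∈ (0,1)`, and let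
`𝔓'[A,B]` be the set of partitions of `𝕀_{[A,B]}` whose set of points contains
`C`.  Then `∫̲_A^B F = sup{σ(F,𝒫) : 𝒫 ∈ 𝔓'[A,B]}` and
`∫̄_A^B F = inf{Σ(F,𝒫) : 𝒫 ∈ 𝔓'[A,B]}` (componentwise). -/
theorem IR.integral_via_partitions_through_point (A B : IR) (h : sll A B)
    (F : IR → IR) (hF : BoundedOn F A B) (s : ℝ) (hs : s ∈ Set.Ioo (0 : ℝ) 1) :
    lowerInt A B F =
      (sSup ((fun Q => (lowerSum A B F Q).1) ''
        {P : Partition | seg A B s ∈ Partition.ipts A B P}),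
       sSup ((fun Q => (lowerSum A B F Q).2) ''
        {P : Partition | seg A B s ∈ Partition.ipts A B P})) ∧
    upperInt A B F =
      (sInf ((fun Q => (upperSum A B F Q).1) ''
        {P : Partition | seg A B s ∈ Partition.ipts A B P}),
       sInf ((fun Q => (upperSum A B F Q).2) ''
        {P : Partition | seg A B s ∈ Partition.ipts A B P})) := by
  obtain ⟨C₀, D₀, hFb⟩ := hF
  have hSne : {P : Partition | seg A B s ∈ Partition.ipts A B P}.Nonempty := by
    refine ⟨twoPart s hs.1 hs.2, ⟨1, Set.mem_Iic.2 (show (1:ℕ) ≤ (twoPart s hs.1 hs.2).n from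
      by norm_num [twoPart]), ?_⟩⟩
    show seg A B ((twoPart s hs.1 hs.2).t 1) = seg A B s
    norm_num [twoPart]
  have hth := exists_through A B h F C₀ D₀ hFb s hs
  constructor
  · rw [lowerInt]
    congr 1
    · exact csSup_range_eq hSne (bddAbove_lowerSum_fst A B h F C₀ D₀ hFb)
        (fun P => by obtain ⟨Q, h1, h2, _⟩ := hth P; exact ⟨Q, h1, h2.1⟩)
    · exact csSup_range_eq hSne (bddAbove_lowerSum_snd A B h F C₀ D₀ hFb)
        (fun P => by obtain ⟨Q, h1, h2, _⟩ := hth P; exact ⟨Q, h1, h2.2⟩)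
  · rw [upperInt]
    congr 1
    · exact csInf_range_eq hSne (bddBelow_upperSum_fst A B h F C₀ D₀ hFb)
        (fun P => by obtain ⟨Q, h1, _, h3⟩ := hth P; exact ⟨Q, h1, h3.1⟩)
    · exact csInf_range_eq hSne (bddBelow_upperSum_snd A B h F C₀ D₀ hFb)
        (fun P => by obtain ⟨Q, h1, _, h3⟩ := hth P; exact ⟨Q, h1, h3.2⟩)
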